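/- arXiv:0903.0607 — 6 statements merged into one kernel-verified Lean document; each statement's English description precedes it below -/
import Mathlib

section
/- Let (M,d) be a metric space, A₁,…,A_p ⊆ M pairwise at distance ≥ s > 0, let Θ = {-1,1}^p with uniform probability measure P, and define f_θ as in the truncated-distance construction. Then the map x ↦ F_x, where F_x(θ) = f_θ(x), is a 1-Lipschitz map from M into L₁(Θ,P). -/
/-- The map `x ↦ F_x`, `F_x(θ) = f_θ(x)`, from `M` into `L₁(Θ, P)` where `Θ = {-1,1}^p`
carries the uniform probability measure, is `1`-Lipschitz; i.e. for all `x y ∈ M`,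
`(1/2^p) ∑_θ |f_θ(x) − f_θ(y)| ≤ d(x,y)`. -/
theorem truncated_distance_map_into_L1_lipschitz {M : Type*} [MetricSpace M]
    (p : ℕ) (s : ℝ) (hs : 0 < s)
    (A : Fin p → Set M) (hA : ∀ i, (A i).Nonempty)
    (hsep : ∀ i j, i ≠ j → ∀ a ∈ A i, ∀ b ∈ A j, s ≤ dist a b)
    (f : (Fin p → Bool) → M → ℝ)
    (hf1 : ∀ (θ : Fin p → Bool) (x : M) (j : Fin p), Metric.infDist x (A j) < s / 2 →
        f θ x = (if θ j then 1 else -1) * (s / 2 - Metric.infDist x (A j)))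
    (hf2 : ∀ (θ : Fin p → Bool) (x : M), (∀ j : Fin p, s / 2 ≤ Metric.infDist x (A j)) →
        f θ x = 0) :
    ∀ x y : M, (1 / 2 ^ p) * ∑ θ : Fin p → Bool, |f θ x - f θ y| ≤ dist x y := by
  intro x y
  -- separation inequality
  have hsep' : ∀ i j, i ≠ j → ∀ u v : M,
      s ≤ Metric.infDist u (A i) + dist u v + Metric.infDist v (A j) := by
    intro i j hij u v
    by_contra h
    push_neg at h
    have h1 : Metric.infDist u (A i) < s - dist u v - Metric.infDist v (A j) := by linarith
    obtain ⟨a, ha, hda⟩ := (Metric.infDist_lt_iff (hA i)).1 h1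
    have h2 : Metric.infDist v (A j) < s - dist u v - dist u a := by linarith
    obtain ⟨b, hb, hdb⟩ := (Metric.infDist_lt_iff (hA j)).1 h2
    have hab := hsep i j hij a ha b hb
    have htri : dist a b ≤ dist a u + dist u v + dist v b := dist_triangle4 a u v b
    rw [dist_comm a u] at htri
    linarith [dist_comm v b]
  -- pointwise 1-Lipschitz bound
  have key : ∀ θ : Fin p → Bool, |f θ x - f θ y| ≤ dist x y := by
    intro θ
    have habs : ∀ (b : Bool) (t : ℝ), 0 ≤ t → |(if b then (1:ℝ) else -1) * t| = t := by
      intro b t ht; cases b <;> simp [abs_of_nonneg ht]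
    by_cases hx : ∃ i, Metric.infDist x (A i) < s / 2
    · obtain ⟨i, hi⟩ := hx
      have hfx := hf1 θ x i hi
      by_cases hy : ∃ j, Metric.infDist y (A j) < s / 2
      · obtain ⟨j, hj⟩ := hy
        have hfy := hf1 θ y j hj
        by_cases hij : i = j
        · subst hij
          rw [hfx, hfy, ← mul_sub, abs_mul]
          have : |(if θ i then (1:ℝ) else -1)| = 1 := by cases θ i <;> simp
          rw [this, one_mul]
          have h1 := Metric.infDist_le_infDist_add_dist (x := x) (y := y) (s := A i)
          have h2 := Metric.infDist_le_infDist_add_dist (x := y) (y := x) (s := A i)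
          rw [dist_comm y x] at h2
          rw [abs_le]; constructor
          · linarith
          · linarith
        · have hsxy := hsep' i j hij x y
          calc |f θ x - f θ y| ≤ |f θ x| + |f θ y| := abs_sub _ _
            _ = (s / 2 - Metric.infDist x (A i)) + (s / 2 - Metric.infDist y (A j)) := by
                rw [hfx, hfy, habs _ _ (by linarith), habs _ _ (by linarith)]
            _ ≤ dist x y := by linarith
      · push_neg at hy
        have hfy := hf2 θ y hy
        have hyi := hy i
        have h2 := Metric.infDist_le_infDist_add_dist (x := y) (y := x) (s := A i)
        rw [dist_comm y x] at h2
        rw [hfx, hfy, sub_zero, habs _ _ (by linarith)]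
        linarith
    · push_neg at hx
      have hfx := hf2 θ x hx
      by_cases hy : ∃ j, Metric.infDist y (A j) < s / 2
      · obtain ⟨j, hj⟩ := hy
        have hfy := hf1 θ y j hj
        have hxj := hx j
        have h2 := Metric.infDist_le_infDist_add_dist (x := x) (y := y) (s := A j)
        rw [hfx, hfy, zero_sub, abs_neg, habs _ _ (by linarith)]
        linarith
      · push_neg at hy
        rw [hf2 θ x hx, hf2 θ y hy]
        simp [dist_nonneg]
  have hsum : ∑ θ : Fin p → Bool, |f θ x - f θ y| ≤ (2 ^ p : ℝ) * dist x y := by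
    calc ∑ θ : Fin p → Bool, |f θ x - f θ y| ≤ ∑ _θ : Fin p → Bool, dist x y :=
          Finset.sum_le_sum fun θ _ => key θ
      _ = (2 ^ p : ℝ) * dist x y := by
          rw [Finset.sum_const, nsmul_eq_mul]
          simp [Fintype.card_fun]
  rw [div_mul_eq_mul_div, one_mul, div_le_iff₀ (by positivity)]
  linarith [hsum, mul_comm (dist x y) ((2:ℝ) ^ p)]
end

section
/- With the notation of the truncated-distance construction: if x ∈ A_j, y ∈ M with dist(y, A_j) ≥ s/2, and θ is chosen uniformly at random from {-1,1}^p, then the probability that f_θ(x) and f_θ(y) have different signs (where sign takes values in {-1,0,1}) is at least 1/2, and moreover ∫_Θ |f_θ(x) − f_θ(y)| dP(θ) ≥ s/4. -/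
/-- With the truncated-distance construction: if `x ∈ A_j` and `dist(y, A_j) ≥ s/2`, then
for `θ` uniform on `{-1,1}^p`, the probability that `f_θ(x)` and `f_θ(y)` have different
signs (signs valued in `{-1,0,1}`) is at least `1/2`, and `∫_Θ |f_θ(x) − f_θ(y)| dP ≥ s/4`. -/
theorem truncated_distance_sign_separation {M : Type*} [MetricSpace M]
    (p : ℕ) (s : ℝ) (hs : 0 < s)
    (A : Fin p → Set M) (hA : ∀ i, (A i).Nonempty)
    (hsep : ∀ i j, i ≠ j → ∀ a ∈ A i, ∀ b ∈ A j, s ≤ dist a b)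
    (f : (Fin p → Bool) → M → ℝ)
    (hf1 : ∀ (θ : Fin p → Bool) (x : M) (j : Fin p), Metric.infDist x (A j) < s / 2 →
        f θ x = (if θ j then 1 else -1) * (s / 2 - Metric.infDist x (A j)))
    (hf2 : ∀ (θ : Fin p → Bool) (x : M), (∀ j : Fin p, s / 2 ≤ Metric.infDist x (A j)) →
        f θ x = 0)
    (j : Fin p) (x y : M) (hx : x ∈ A j) (hy : s / 2 ≤ Metric.infDist y (A j)) :
    (1 : ℝ) / 2 ≤
        (Set.ncard {θ : Fin p → Bool | Real.sign (f θ x) ≠ Real.sign (f θ y)} : ℝ) / 2 ^ p ∧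
    s / 4 ≤ (1 / 2 ^ p) * ∑ θ : Fin p → Bool, |f θ x - f θ y| := by
  classical
  have hxd : Metric.infDist x (A j) = 0 := Metric.infDist_zero_of_mem hx
  have hfx : ∀ θ : Fin p → Bool, f θ x = (if θ j then 1 else -1) * (s / 2) := by
    intro θ
    rw [hf1 θ x j (by rw [hxd]; linarith), hxd]
    ring_nf
  set σ : (Fin p → Bool) → (Fin p → Bool) := fun θ => Function.update θ j (!θ j) with hσ
  have hσj : ∀ θ, σ θ j = !θ j := by intro θ; simp [hσ]
  have hσne : ∀ θ k, k ≠ j → σ θ k = θ k := by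
    intro θ k hk; simp [hσ, Function.update_of_ne hk]
  have hσσ : ∀ θ, σ (σ θ) = θ := by
    intro θ; funext k
    by_cases hk : k = j
    · subst hk; simp [hσj]
    · rw [hσne _ _ hk, hσne _ _ hk]
  have hσinj : Function.Injective σ := Function.LeftInverse.injective hσσ
  have hfσx : ∀ θ, f (σ θ) x = - f θ x := by
    intro θ
    rw [hfx, hfx, hσj]
    cases θ j <;> simp <;> ring
  have hfσy : ∀ θ, f (σ θ) y = f θ y := by
    intro θ
    by_cases h : ∀ k : Fin p, s / 2 ≤ Metric.infDist y (A k)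
    · rw [hf2 _ _ h, hf2 _ _ h]
    · push_neg at h
      obtain ⟨k, hk⟩ := h
      have hkj : k ≠ j := by
        intro hkj; subst hkj; linarith
      rw [hf1 _ _ _ hk, hf1 _ _ _ hk, hσne _ _ hkj]
  have hfx0 : ∀ θ, f θ x ≠ 0 := by
    intro θ
    rw [hfx]; cases θ j <;> simp <;> linarith
  -- the sign part
  have hkey : ∀ θ : Fin p → Bool,
      Real.sign (f θ x) = Real.sign (f θ y) →
      Real.sign (f (σ θ) x) ≠ Real.sign (f (σ θ) y) := by
    intro θ h1 h2
    rw [hfσx, hfσy, Real.sign_neg, h1] at h2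
    have : Real.sign (f θ y) = 0 := by linarith
    rw [← h1] at this
    exact hfx0 θ (Real.sign_eq_zero_iff.mp this)
  set T : Finset (Fin p → Bool) :=
    Finset.univ.filter (fun θ => Real.sign (f θ x) ≠ Real.sign (f θ y)) with hT
  have hncard : {θ : Fin p → Bool | Real.sign (f θ x) ≠ Real.sign (f θ y)}.ncard = T.card := by
    rw [hT]
    rw [Set.ncard_eq_toFinset_card']
    congr 1
    ext θ
    simp
  have hmaps : ∀ θ ∈ Tᶜ, σ θ ∈ T := by
    intro θ hθ
    simp only [hT, Finset.mem_compl, Finset.mem_filter, Finset.mem_univ, true_and,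
      not_not] at hθ ⊢
    exact hkey θ hθ
  have hcardle : Tᶜ.card ≤ T.card :=
    Finset.card_le_card_of_injOn σ hmaps (Function.Injective.injOn hσinj)
  have hcompl : Tᶜ.card = 2 ^ p - T.card := by
    rw [Finset.card_compl]
    congr 1
    simp [Fintype.card_fun]
  have hTle : T.card ≤ 2 ^ p := by
    calc T.card ≤ Fintype.card (Fin p → Bool) := Finset.card_le_univ T
    _ = 2 ^ p := by simp [Fintype.card_fun]
  have h2T : 2 ^ p ≤ 2 * T.card := by omega
  constructor
  · rw [hncard, div_le_div_iff₀ (by norm_num) (by positivity)]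
    have : (2 : ℝ) ^ p ≤ 2 * T.card := by exact_mod_cast h2T
    linarith
  · -- the integral part
    have hpair : ∀ θ : Fin p → Bool, s ≤ |f θ x - f θ y| + |f (σ θ) x - f (σ θ) y| := by
      intro θ
      have htri : |f θ x - f (σ θ) x| ≤ |f θ x - f θ y| + |f θ y - f (σ θ) x| :=
        abs_sub_le _ _ _
      have habs : |f θ x| = s / 2 := by
        rw [hfx]
        cases θ j <;>
          simp [abs_mul, abs_of_nonneg (by linarith : (0:ℝ) ≤ s / 2)]
      have h1 : |f θ x - f (σ θ) x| = s := by
        have h2 : f θ x - f (σ θ) x = 2 * f θ x := by rw [hfσx]; ring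
        rw [h2, abs_mul, habs]
        rw [abs_of_nonneg (by norm_num : (0:ℝ) ≤ 2)]
        ring
      rw [hfσy]
      calc s = |f θ x - f (σ θ) x| := h1.symm
        _ ≤ |f θ x - f θ y| + |f θ y - f (σ θ) x| := htri
        _ = |f θ x - f θ y| + |f (σ θ) x - f θ y| := by rw [abs_sub_comm (f θ y)]
    have hsum : (2 ^ p : ℝ) * s ≤ 2 * ∑ θ : Fin p → Bool, |f θ x - f θ y| := by
      have hre : ∑ θ : Fin p → Bool, |f (σ θ) x - f (σ θ) y|
          = ∑ θ : Fin p → Bool, |f θ x - f θ y| := by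
        exact Fintype.sum_equiv ⟨σ, σ, hσσ, hσσ⟩ _ _ (fun θ => rfl)
      have := Finset.sum_le_sum (fun θ (_ : θ ∈ Finset.univ) => hpair θ)
      rw [Finset.sum_add_distrib, hre, Finset.sum_const] at this
      simp only [Finset.card_univ, Fintype.card_fun, Fintype.card_bool, Fintype.card_fin,
        smul_eq_mul, nsmul_eq_mul] at this
      push_cast at this ⊢
      linarith
    have hp : (0 : ℝ) < 2 ^ p := by positivity
    have h2 : s / 2 ≤ (1 / 2 ^ p : ℝ) * ∑ θ : Fin p → Bool, |f θ x - f θ y| := by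
      rw [one_div, inv_mul_eq_div, le_div_iff₀ hp]
      linarith
    linarith
end

section
/- Exhaustion lemma: let (M,d) be a finite metric space with diameter ≥ R, let ν be a probability measure on M, and suppose that every subset F ⊆ M of diameter ≥ R contains a subset A ⊆ F of diameter < R with ν(∂_F A) ≤ φ·ν(A), where ∂_F A = {x ∈ F \ A : dist(x,A) ≤ s}. Then there exist finitely many pairwise disjoint sets A₁,…,A_p, each of diameter < R, with pairwise distances d(A_i,A_j) > s for i ≠ j, such that the sets A_i together with their boundaries ∂_{F_i} A_i (taken in the successively shrinking sets F₁ ⊇ F₂ ⊇ …) cover all of M, and ν(⋃_i ∂_{F_i} A_i) ≤ φ·ν(⋃_i A_i). -/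
/-- The measure of a set given by weights `w` on a finite type. -/
noncomputable def nuW {M : Type*} [Fintype M] (w : M → ℝ) (A : Set M) : ℝ :=
  ∑ x, A.indicator w x

/-- The boundary of `A` inside `F` at scale `s`:
`∂_F A = {x ∈ F \ A : dist(x,A) ≤ s}`. -/
def bdry {M : Type*} [MetricSpace M] (s : ℝ) (F A : Set M) : Set M :=
  {x | x ∈ F ∧ x ∉ A ∧ Metric.infDist x A ≤ s}

lemma nuW_nonneg {M : Type*} [Fintype M] (w : M → ℝ) (hw0 : ∀ x, 0 ≤ w x) (A : Set M) :
    0 ≤ nuW w A :=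
  Finset.sum_nonneg fun x _ => Set.indicator_nonneg (fun y _ => hw0 y) x

lemma nuW_empty {M : Type*} [Fintype M] (w : M → ℝ) : nuW w (∅ : Set M) = 0 := by
  simp [nuW]

lemma nuW_biUnion {M : Type*} [Fintype M] (w : M → ℝ) (p : ℕ) (B : ℕ → Set M)
    (hd : ∀ i j, i < p → j < p → i ≠ j → Disjoint (B i) (B j)) :
    nuW w (⋃ i ∈ Finset.range p, B i) = ∑ i ∈ Finset.range p, nuW w (B i) := by
  induction p with
  | zero => simp [nuW]
  | succ n ih =>
    have hU : (⋃ i ∈ Finset.range (n+1), B i) = (⋃ i ∈ Finset.range n, B i) ∪ B n := by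
      rw [Finset.range_add_one]
      simp [Set.union_comm]
    have hdis : Disjoint (⋃ i ∈ Finset.range n, B i) (B n) := by
      rw [Set.disjoint_left]
      intro x hx hxn
      simp only [Set.mem_iUnion, Finset.mem_range] at hx
      obtain ⟨i, hi, hxi⟩ := hx
      exact Set.disjoint_left.1 (hd i n (Nat.lt_succ_of_lt hi) (Nat.lt_succ_self n)
        (Nat.ne_of_lt hi)) hxi hxn
    rw [hU, Finset.sum_range_succ, ← ih (fun i j hi hj hij =>
      hd i j (Nat.lt_succ_of_lt hi) (Nat.lt_succ_of_lt hj) hij)]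
    unfold nuW
    rw [← Finset.sum_add_distrib]
    refine Finset.sum_congr rfl fun x _ => ?_
    rw [Set.indicator_union_of_disjoint hdis]

/-- Exhaustion lemma: if every subset `F` of diameter `≥ R` of a finite metric space `M`
contains a (nonempty) subset `A` of diameter `< R` with `ν(∂_F A) ≤ φ·ν(A)`, then one can
exhaust `M` by pairwise disjoint sets `A₁,…,A_p` of diameter `< R`, at pairwise distances
`> s`, which together with their boundaries `∂_{F_i} A_i` (in the shrinking sets
`F₁ = M ⊇ F₂ ⊇ …`) cover `M`, and with `ν(⋃ ∂_{F_i} A_i) ≤ φ·ν(⋃ A_i)`. -/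
theorem exhaustion_lemma {M : Type*} [MetricSpace M] [Fintype M]
    (s R φ : ℝ) (hs : 0 < s) (hR : 0 < R) (hφ : 0 ≤ φ)
    (w : M → ℝ) (hw0 : ∀ x, 0 ≤ w x) (hw1 : ∑ x, w x = 1)
    (hdiam : R ≤ Metric.diam (Set.univ : Set M))
    (hex : ∀ F : Set M, R ≤ Metric.diam F →
      ∃ A : Set M, A ⊆ F ∧ A.Nonempty ∧ Metric.diam A < R ∧
        nuW w (bdry s F A) ≤ φ * nuW w A) :
    ∃ (p : ℕ) (A Fs : ℕ → Set M),
      Fs 0 = Set.univ ∧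
      (∀ i < p, A i ⊆ Fs i ∧ Metric.diam (A i) < R ∧
        Fs (i + 1) = Fs i \ (A i ∪ bdry s (Fs i) (A i))) ∧
      (∀ i j, i < p → j < p → i ≠ j → ∀ a ∈ A i, ∀ b ∈ A j, s < dist a b) ∧
      (⋃ i ∈ Finset.range p, (A i ∪ bdry s (Fs i) (A i))) = Set.univ ∧
      nuW w (⋃ i ∈ Finset.range p, bdry s (Fs i) (A i)) ≤
        φ * nuW w (⋃ i ∈ Finset.range p, A i) := by
  classical
  -- the choice of the next piece
  set pick : Set M → Set M := fun F =>
    if h : R ≤ Metric.diam F then (hex F h).choose else F with hpickdef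
  have pick_subset : ∀ F, pick F ⊆ F := by
    intro F
    by_cases h : R ≤ Metric.diam F
    · simp only [hpickdef, dif_pos h]; exact (hex F h).choose_spec.1
    · simp [hpickdef, dif_neg h]
  have pick_nonempty : ∀ F : Set M, F.Nonempty → (pick F).Nonempty := by
    intro F hF
    by_cases h : R ≤ Metric.diam F
    · simp only [hpickdef, dif_pos h]; exact (hex F h).choose_spec.2.1
    · simpa [hpickdef, dif_neg h] using hF
  have pick_diam : ∀ F : Set M, Metric.diam (pick F) < R := by
    intro F
    by_cases h : R ≤ Metric.diam F
    · simp only [hpickdef, dif_pos h]; exact (hex F h).choose_spec.2.2.1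
    · simpa [hpickdef, dif_neg h] using not_le.1 h
  have pick_bd : ∀ F : Set M, nuW w (bdry s F (pick F)) ≤ φ * nuW w (pick F) := by
    intro F
    by_cases h : R ≤ Metric.diam F
    · simp only [hpickdef, dif_pos h]; exact (hex F h).choose_spec.2.2.2
    · have : pick F = F := by simp [hpickdef, dif_neg h]
      rw [this]
      have : bdry s F F = ∅ := by
        ext x; simp [bdry]
      rw [this, nuW_empty]
      exact mul_nonneg hφ (nuW_nonneg w hw0 F)
  -- the sequence of shrinking sets
  set Fs : ℕ → Set M := fun n =>
    Nat.rec Set.univ (fun _ Fp => Fp \ (pick Fp ∪ bdry s Fp (pick Fp))) n with hFsdef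
  have hFs0 : Fs 0 = Set.univ := rfl
  have hFsucc : ∀ n, Fs (n+1) = Fs n \ (pick (Fs n) ∪ bdry s (Fs n) (pick (Fs n))) :=
    fun n => rfl
  set A : ℕ → Set M := fun n => pick (Fs n) with hAdef
  have hmono : ∀ n, Fs (n+1) ⊆ Fs n := by
    intro n; rw [hFsucc]; exact Set.diff_subset
  have hmono' : ∀ i j, i ≤ j → Fs j ⊆ Fs i := by
    intro i j hij
    induction j with
    | zero => simp_all
    | succ n ih =>
      rcases Nat.lt_or_ge i (n+1) with h | h
      · exact (hmono n).trans (ih (Nat.lt_succ_iff.1 h))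
      · have : i = n + 1 := le_antisymm hij h
        subst this; rfl
  -- termination
  have hstep : ∀ n, (Fs n).Nonempty → (Fs (n+1)).ncard < (Fs n).ncard := by
    intro n hne
    refine Set.ncard_lt_ncard ?_ (Set.toFinite _)
    rw [Set.ssubset_iff_of_subset (hmono n)]
    obtain ⟨a, ha⟩ := pick_nonempty (Fs n) hne
    refine ⟨a, pick_subset _ ha, ?_⟩
    rw [hFsucc]
    intro hcon
    exact hcon.2 (Or.inl ha)
  have hterm : ∃ n, Fs n = ∅ := by
    by_contra hcon
    push_neg at hcon
    have key : ∀ n, (Fs n).ncard + n ≤ Fintype.card M := by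
      intro n
      induction n with
      | zero => simp [hFs0, Set.ncard_univ, Nat.card_eq_fintype_card]
      | succ m ih =>
        have h2 := hstep m (hcon m)
        omega
    have := key (Fintype.card M + 1)
    omega
  set p : ℕ := Nat.find hterm with hpdef
  have hFp : Fs p = ∅ := Nat.find_spec hterm
  have hFne : ∀ i < p, (Fs i).Nonempty :=
    fun i hi => Set.nonempty_iff_ne_empty.2 (Nat.find_min hterm hi)
  refine ⟨p, A, Fs, hFs0, ?_, ?_, ?_, ?_⟩
  · intro i _
    exact ⟨pick_subset _, pick_diam _, hFsucc i⟩
  · -- distances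
    have key : ∀ i j, i < j → j < p → ∀ a ∈ A i, ∀ b ∈ A j, s < dist a b := by
      intro i j hij hjp a ha b hb
      have hbF : b ∈ Fs (i+1) := hmono' (i+1) j hij (pick_subset _ hb)
      rw [hFsucc] at hbF
      have hbnA : b ∉ A i := fun h => hbF.2 (Or.inl h)
      have hbnB : b ∉ bdry s (Fs i) (A i) := fun h => hbF.2 (Or.inr h)
      have : s < Metric.infDist b (A i) := by
        by_contra hle
        exact hbnB ⟨hbF.1, hbnA, not_lt.1 hle⟩
      calc s < Metric.infDist b (A i) := this
        _ ≤ dist b a := Metric.infDist_le_dist_of_mem ha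
        _ = dist a b := dist_comm b a
    intro i j hi hj hij a ha b hb
    rcases Nat.lt_or_ge i j with h | h
    · exact key i j h hj a ha b hb
    · have h' : j < i := lt_of_le_of_ne h (Ne.symm hij)
      rw [dist_comm]
      exact key j i h' hi b hb a ha
  · -- cover
    have key : ∀ n, Fs 0 ⊆ (⋃ i ∈ Finset.range n, (A i ∪ bdry s (Fs i) (A i))) ∪ Fs n := by
      intro n
      induction n with
      | zero => simp
      | succ m ih =>
        refine ih.trans (Set.union_subset ?_ ?_)
        · intro x hx
          left
          simp only [Set.mem_iUnion, Finset.mem_range] at hx ⊢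
          obtain ⟨i, hi, hxi⟩ := hx
          exact ⟨i, Nat.lt_succ_of_lt hi, hxi⟩
        · intro x hx
          by_cases hmem : x ∈ A m ∪ bdry s (Fs m) (A m)
          · left
            simp only [Set.mem_iUnion, Finset.mem_range]
            exact ⟨m, Nat.lt_succ_self m, hmem⟩
          · right
            rw [hFsucc]
            exact ⟨hx, hmem⟩
    have := key p
    rw [hFs0, hFp, Set.union_empty] at this
    exact Set.eq_univ_of_univ_subset this
  · -- measure estimate
    have hsub : ∀ i, A i ∪ bdry s (Fs i) (A i) ⊆ Fs i := by
      intro i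
      refine Set.union_subset (pick_subset _) ?_
      intro x hx; exact hx.1
    have hdisj : ∀ i j, i < p → j < p → i ≠ j →
        Disjoint (A i ∪ bdry s (Fs i) (A i)) (A j ∪ bdry s (Fs j) (A j)) := by
      have key : ∀ i j, i < j →
          Disjoint (A i ∪ bdry s (Fs i) (A i)) (A j ∪ bdry s (Fs j) (A j)) := by
        intro i j hij
        rw [Set.disjoint_left]
        intro x hx hxj
        have : x ∈ Fs (i+1) := hmono' (i+1) j hij (hsub j hxj)
        rw [hFsucc] at this
        exact this.2 hx
      intro i j _ _ hij
      rcases Nat.lt_or_ge i j with h | h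
      · exact key i j h
      · exact (key j i (lt_of_le_of_ne h (Ne.symm hij))).symm
    have hdA : ∀ i j, i < p → j < p → i ≠ j → Disjoint (A i) (A j) := fun i j hi hj hij =>
      Disjoint.mono Set.subset_union_left Set.subset_union_left (hdisj i j hi hj hij)
    have hdB : ∀ i j, i < p → j < p → i ≠ j →
        Disjoint (bdry s (Fs i) (A i)) (bdry s (Fs j) (A j)) := fun i j hi hj hij =>
      Disjoint.mono Set.subset_union_right Set.subset_union_right (hdisj i j hi hj hij)
    rw [nuW_biUnion w p _ hdB, nuW_biUnion w p _ hdA, Finset.mul_sum]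
    exact Finset.sum_le_sum fun i _ => pick_bd (Fs i)
end

section
/- Random sign separation estimate: let (Ω, P) = (Λ × Θ, μ ⊗ P_Θ) where Θ = {-1,1}^ℕ with the fair-coin product measure, and let F_u, F_v : Ω → ℝ be measurable functions such that for every λ ∈ Λ, F_u(λ,·) = θ_{k(λ)}·a(λ) and F_v(λ,·) = θ_{l(λ)}·b(λ) with k(λ) ≠ l(λ), a(λ),b(λ) ≥ 0, and ∫_Λ a(λ) dμ ≥ εΔ, ∫_Λ b(λ) dμ ≥ εΔ. Then ‖F_u − F_v‖_{L₁(Ω)} ≥ εΔ. -/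
open MeasureTheory
open scoped ENNReal

/-- Random sign separation estimate.  `(Ω, P) = (Λ × Θ, μ ⊗ P)`, where on `Θ` live
fair-coin signs `X j : Θ → {-1,1}` with `P(X i ≠ X j) = 1/2` for `i ≠ j`.  If
`F_u(λ,θ) = X_{k(λ)}(θ)·a(λ)`, `F_v(λ,θ) = X_{l(λ)}(θ)·b(λ)` with `k(λ) ≠ l(λ)`,
`a, b ≥ 0`, and `∫ a dμ ≥ εΔ`, `∫ b dμ ≥ εΔ`, then `‖F_u − F_v‖_{L₁} ≥ εΔ`. -/
theorem random_sign_separation {Λ Θ : Type*} [MeasurableSpace Λ] [MeasurableSpace Θ]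
    (μ : Measure Λ) (P : Measure Θ) [IsProbabilityMeasure μ] [IsProbabilityMeasure P]
    (X : ℕ → Θ → ℝ) (hXmeas : ∀ j, Measurable (X j))
    (hXval : ∀ (j : ℕ) (θ : Θ), X j θ = 1 ∨ X j θ = -1)
    (hXdiff : ∀ i j : ℕ, i ≠ j → P {θ | X i θ ≠ X j θ} = 1 / 2)
    (k l : Λ → ℕ) (hk : Measurable k) (hl : Measurable l) (hkl : ∀ x : Λ, k x ≠ l x)
    (a b : Λ → ℝ) (ha0 : ∀ x, 0 ≤ a x) (hb0 : ∀ x, 0 ≤ b x)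
    (hai : Integrable a μ) (hbi : Integrable b μ)
    (ε Δ : ℝ) (hε : 0 < ε) (hΔ : 0 < Δ)
    (hA : ε * Δ ≤ ∫ x, a x ∂μ) (hB : ε * Δ ≤ ∫ x, b x ∂μ) :
    ε * Δ ≤ ∫ q : Λ × Θ, |X (k q.1) q.2 * a q.1 - X (l q.1) q.2 * b q.1| ∂(μ.prod P) := by
  set f : Λ × Θ → ℝ := fun q => |X (k q.1) q.2 * a q.1 - X (l q.1) q.2 * b q.1| with hf
  have hXabs : ∀ j θ, |X j θ| = 1 := by
    intro j θ; rcases hXval j θ with h | h <;> rw [h] <;> norm_num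
  -- measurability of uncurried X
  have hU : Measurable fun p : Θ × ℕ => X p.2 p.1 :=
    measurable_from_prod_countable_left fun j => hXmeas j
  have hXk : Measurable fun q : Λ × Θ => X (k q.1) q.2 :=
    hU.comp (measurable_snd.prodMk (hk.comp measurable_fst))
  have hXl : Measurable fun q : Λ × Θ => X (l q.1) q.2 :=
    hU.comp (measurable_snd.prodMk (hl.comp measurable_fst))
  -- integrability of (a+b)∘fst on the product
  have hafst : Integrable (fun q : Λ × Θ => a q.1) (μ.prod P) := by
    have := hai.mul_prod (integrable_const (1 : ℝ)) (ν := P)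
    simpa using this
  have hbfst : Integrable (fun q : Λ × Θ => b q.1) (μ.prod P) := by
    have := hbi.mul_prod (integrable_const (1 : ℝ)) (ν := P)
    simpa using this
  -- f is integrable on the product
  have hfaesm : AEStronglyMeasurable f (μ.prod P) := by
    have := ((hXk.aestronglyMeasurable.mul (hafst.1)).sub
      (hXl.aestronglyMeasurable.mul (hbfst.1))).norm
    simpa [hf, Real.norm_eq_abs, Pi.sub_apply] using this
  have hfle : ∀ q : Λ × Θ, |f q| ≤ a q.1 + b q.1 := by
    intro q
    rw [abs_abs]
    calc |X (k q.1) q.2 * a q.1 - X (l q.1) q.2 * b q.1|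
        ≤ |X (k q.1) q.2 * a q.1| + |X (l q.1) q.2 * b q.1| := abs_sub _ _
      _ = a q.1 + b q.1 := by
          rw [abs_mul, abs_mul, hXabs, hXabs, one_mul, one_mul,
            abs_of_nonneg (ha0 _), abs_of_nonneg (hb0 _)]
  have hfint : Integrable f (μ.prod P) :=
    (hafst.add hbfst).mono' hfaesm (Filter.Eventually.of_forall hfle)
  -- inner integral lower bound
  have hinner : ∀ x : Λ, (a x + b x) / 2 ≤ ∫ θ, f (x, θ) ∂P := by
    intro x
    set S : Set Θ := {θ | X (k x) θ ≠ X (l x) θ} with hS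
    have hSmeas : MeasurableSet S := by
      have : MeasurableSet {θ | X (k x) θ = X (l x) θ} :=
        measurableSet_eq_fun (hXmeas (k x)) (hXmeas (l x))
      exact this.compl
    have hPS : P S = 1 / 2 := hXdiff _ _ (hkl x)
    have hPSr : (P S).toReal = 1 / 2 := by rw [hPS]; simp
    have hint : Integrable (fun θ => f (x, θ)) P := by
      refine Integrable.mono' (integrable_const (a x + b x))
        ((((hXmeas (k x)).mul_const (a x)).sub
          ((hXmeas (l x)).mul_const (b x))).abs.aestronglyMeasurable)
        (Filter.Eventually.of_forall fun θ => ?_)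
      rw [Real.norm_eq_abs, abs_abs]
      calc |X (k x) θ * a x - X (l x) θ * b x|
          ≤ |X (k x) θ * a x| + |X (l x) θ * b x| := abs_sub _ _
        _ = a x + b x := by
            rw [abs_mul, abs_mul, hXabs, hXabs, one_mul, one_mul,
              abs_of_nonneg (ha0 _), abs_of_nonneg (hb0 _)]
    have heqS : ∀ θ ∈ S, f (x, θ) = a x + b x := by
      intro θ hθ
      have hne : X (k x) θ ≠ X (l x) θ := hθ
      show |X (k x) θ * a x - X (l x) θ * b x| = a x + b x
      rcases hXval (k x) θ with h1 | h1 <;> rcases hXval (l x) θ with h2 | h2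
      · exact absurd (h1.trans h2.symm) hne
      · rw [h1, h2, one_mul, neg_one_mul, sub_neg_eq_add]
        exact abs_of_nonneg (add_nonneg (ha0 x) (hb0 x))
      · rw [h1, h2, one_mul, neg_one_mul,
          show -a x - b x = -(a x + b x) by ring, abs_neg]
        exact abs_of_nonneg (add_nonneg (ha0 x) (hb0 x))
      · exact absurd (h1.trans h2.symm) hne
    calc (a x + b x) / 2 = (P S).toReal • (a x + b x) := by rw [hPSr, smul_eq_mul]; ring
      _ = ∫ _ in S, (a x + b x) ∂P := (setIntegral_const _).symm
      _ = ∫ θ in S, f (x, θ) ∂P := by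
          refine (setIntegral_congr_fun hSmeas ?_).symm
          intro θ hθ; exact heqS θ hθ
      _ ≤ ∫ θ, f (x, θ) ∂P := by
          refine setIntegral_le_integral hint ?_
          exact Filter.Eventually.of_forall fun θ => abs_nonneg _
  have habint : Integrable (fun x => (a x + b x) / 2) μ := (hai.add hbi).div_const 2
  calc ε * Δ ≤ ((∫ x, a x ∂μ) + (∫ x, b x ∂μ)) / 2 := by linarith
    _ = ∫ x, (a x + b x) / 2 ∂μ := by
        rw [integral_div, integral_add hai hbi]
    _ ≤ ∫ x, ∫ θ, f (x, θ) ∂P ∂μ :=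
        integral_mono habint hfint.integral_prod_left hinner
    _ = ∫ q : Λ × Θ, f q ∂(μ.prod P) := (integral_prod f hfint).symm
end

section
/- Gluing lemma for coarse embeddings: let X be a metric space, O ∈ X, and for each i ≥ 0 let φ_i : X → L₁(Ω_i) be 1-Lipschitz maps into disjoint L₁ spaces. Suppose there are constants ε > 0 and an increasing sequence d_i → ∞ such that d(u,v) ≥ d_i implies ‖φ_i(u) − φ_i(v)‖ ≥ 2^i ε. Define φ(v) = ⊕_i (2/3)^i (φ_i(v) − φ_i(O)) ∈ L₁(⊔_i Ω_i). Then φ is well-defined (φ(v) ∈ L₁ for each v), 3-Lipschitz, and satisfies ‖φ(u) − φ(v)‖ ≥ (4/3)^i ε whenever d(u,v) ≥ d_i; in particular, if d_i grows in i (e.g., d_i is polynomial in 2^i), φ is a coarse embedding of X into L₁. -/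
open Filter

/-- Gluing lemma for coarse embeddings.  Given `1`-Lipschitz maps `φ_i : X → L₁(Ω_i)`,
a basepoint `O`, `ε > 0` and a nondecreasing sequence `d_i → ∞` such that
`d(u,v) ≥ d_i ⟹ ‖φ_i(u) − φ_i(v)‖ ≥ 2^i ε`, the map
`Φ(v) = ⊕_i (2/3)^i (φ_i(v) − φ_i(O))` is a well-defined map into the `ℓ₁`-sum of the
spaces, is `3`-Lipschitz, satisfies `‖Φ(u) − Φ(v)‖ ≥ (4/3)^i ε` whenever `d(u,v) ≥ d_i`,
and is a coarse embedding. -/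
theorem gluing_coarse_embedding {X : Type*} [MetricSpace X] (E : ℕ → Type*)
    [∀ i, NormedAddCommGroup (E i)] [∀ i, NormedSpace ℝ (E i)]
    (φi : (i : ℕ) → X → E i) (hLip : ∀ i, LipschitzWith 1 (φi i))
    (O : X) (ε : ℝ) (hε : 0 < ε)
    (d : ℕ → ℝ) (hd : Monotone d) (hdtop : Tendsto d atTop atTop)
    (hlow : ∀ (i : ℕ) (u v : X), d i ≤ dist u v → 2 ^ i * ε ≤ ‖φi i u - φi i v‖) :
    ∃ Φ : X → lp E 1,
      (∀ (v : X) (i : ℕ), (Φ v : ∀ i, E i) i = ((2 : ℝ) / 3) ^ i • (φi i v - φi i O)) ∧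
      LipschitzWith 3 Φ ∧
      (∀ (i : ℕ) (u v : X), d i ≤ dist u v → ((4 : ℝ) / 3) ^ i * ε ≤ ‖Φ u - Φ v‖) ∧
      (∃ ρ₁ ρ₂ : ℝ → ℝ, Monotone ρ₁ ∧ Monotone ρ₂ ∧
        (∀ u v : X, ρ₁ (dist u v) ≤ ‖Φ u - Φ v‖ ∧ ‖Φ u - Φ v‖ ≤ ρ₂ (dist u v)) ∧
        Tendsto ρ₁ atTop atTop) := by
  have h23 : (0:ℝ) ≤ 2/3 := by norm_num
  have h23' : (2/3:ℝ) < 1 := by norm_num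
  have hpow : ∀ i : ℕ, (0:ℝ) ≤ (2/3)^i := fun i => pow_nonneg h23 i
  have hnlt : ∀ (i : ℕ) (u v : X), ‖φi i u - φi i v‖ ≤ dist u v := by
    intro i u v
    rw [← dist_eq_norm]
    simpa using (hLip i).dist_le_mul u v
  have hsmul : ∀ (i : ℕ) (x : E i), ‖((2:ℝ)/3)^i • x‖ = ((2:ℝ)/3)^i * ‖x‖ := by
    intro i x
    rw [norm_smul, Real.norm_eq_abs, abs_of_nonneg (hpow i)]
  have hsummable : ∀ u v : X, Summable fun i : ℕ => ((2:ℝ)/3)^i * ‖φi i u - φi i v‖ := by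
    intro u v
    refine Summable.of_nonneg_of_le (fun i => ?_) (fun i => ?_)
      ((summable_geometric_of_lt_one h23 h23').mul_right (dist u v))
    · exact mul_nonneg (hpow i) (norm_nonneg _)
    · exact mul_le_mul_of_nonneg_left (hnlt i u v) (hpow i)
  have hmem : ∀ v : X, Memℓp (fun i : ℕ => ((2:ℝ)/3)^i • (φi i v - φi i O)) 1 := by
    intro v
    apply memℓp_gen
    simp only [ENNReal.toReal_one, Real.rpow_one]
    have := hsummable v O
    refine this.congr fun i => ?_
    rw [hsmul]
  set Φ : X → lp E 1 := fun v => ⟨_, hmem v⟩ with hΦ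
  have hcoord : ∀ (v : X) (i : ℕ),
      (Φ v : ∀ i, E i) i = ((2:ℝ)/3)^i • (φi i v - φi i O) := fun v i => rfl
  have hsub : ∀ (u v : X) (i : ℕ),
      ((Φ u - Φ v : lp E 1) : ∀ i, E i) i = ((2:ℝ)/3)^i • (φi i u - φi i v) := by
    intro u v i
    rw [lp.coeFn_sub, Pi.sub_apply, hcoord, hcoord, ← smul_sub,
      sub_sub_sub_cancel_right]
  have hnorm : ∀ u v : X, ‖Φ u - Φ v‖ = ∑' i : ℕ, ((2:ℝ)/3)^i * ‖φi i u - φi i v‖ := by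
    intro u v
    have h1 : (0:ℝ) < (1 : ENNReal).toReal := by norm_num
    rw [lp.norm_eq_tsum_rpow h1 (Φ u - Φ v)]
    simp only [ENNReal.toReal_one, Real.rpow_one, one_div_one, Real.rpow_one]
    congr 1
    ext i
    rw [hsub u v i, hsmul]
  have hupper : ∀ u v : X, ‖Φ u - Φ v‖ ≤ 3 * dist u v := by
    intro u v
    rw [hnorm]
    calc ∑' i : ℕ, ((2:ℝ)/3)^i * ‖φi i u - φi i v‖
        ≤ ∑' i : ℕ, ((2:ℝ)/3)^i * dist u v := by
          refine Summable.tsum_le_tsum (fun i => mul_le_mul_of_nonneg_left (hnlt i u v) (hpow i))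
            (hsummable u v) ((summable_geometric_of_lt_one h23 h23').mul_right _)
      _ = (∑' i : ℕ, ((2:ℝ)/3)^i) * dist u v := tsum_mul_right
      _ = 3 * dist u v := by rw [tsum_geometric_of_lt_one h23 h23']; norm_num
  have hlower : ∀ (i : ℕ) (u v : X), d i ≤ dist u v →
      ((4:ℝ)/3)^i * ε ≤ ‖Φ u - Φ v‖ := by
    intro i u v h
    calc ((4:ℝ)/3)^i * ε = ((2:ℝ)/3)^i * (2^i * ε) := by
          rw [← mul_assoc, ← mul_pow]; norm_num
      _ ≤ ((2:ℝ)/3)^i * ‖φi i u - φi i v‖ :=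
          mul_le_mul_of_nonneg_left (hlow i u v h) (hpow i)
      _ = ‖((Φ u - Φ v : lp E 1) : ∀ i, E i) i‖ := by rw [hsub u v i, hsmul]
      _ ≤ ‖Φ u - Φ v‖ := lp.norm_apply_le_norm one_ne_zero _ i
  refine ⟨Φ, hcoord, ?_, hlower, ?_⟩
  · refine LipschitzWith.of_dist_le_mul fun u v => ?_
    rw [dist_eq_norm]
    simpa using hupper u v
  · set S : ℝ → Set ℝ := fun t =>
      insert 0 ((fun i : ℕ => ((4:ℝ)/3)^i * ε) '' {i : ℕ | d i ≤ t}) with hS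
    have hbdd : ∀ t, BddAbove (S t) := by
      intro t
      obtain ⟨N, hN⟩ := (hdtop.eventually_ge_atTop (t+1)).exists_forall_of_atTop
      have hfin : ({i : ℕ | d i ≤ t}).Finite := by
        refine (Set.finite_Iio N).subset fun i hi => ?_
        by_contra hiN
        have : t + 1 ≤ d i := hN i (le_of_not_gt hiN)
        have : d i ≤ t := hi
        linarith
      exact ((hfin.image _).insert 0).bddAbove
    refine ⟨fun t => sSup (S t), fun t => 3 * t, ?_, fun a b hab => by dsimp only; linarith, ?_, ?_⟩
    · intro a b hab
      refine csSup_le_csSup (hbdd b) ⟨0, Set.mem_insert 0 _⟩ ?_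
      exact Set.insert_subset_insert (Set.image_mono fun i hi => le_trans hi hab)
    · intro u v
      refine ⟨?_, hupper u v⟩
      refine Real.sSup_le (fun x hx => ?_) (norm_nonneg _)
      rcases hx with rfl | ⟨i, hi, rfl⟩
      · exact norm_nonneg _
      · exact hlower i u v hi
    · rw [tendsto_atTop_atTop]
      intro M
      obtain ⟨i, hi⟩ := (((tendsto_pow_atTop_atTop_of_one_lt
        (by norm_num : (1:ℝ) < 4/3)).atTop_mul_const hε).eventually_ge_atTop M).exists
      refine ⟨d i, fun t ht => ?_⟩
      refine le_trans hi (le_csSup (hbdd t) ?_)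
      exact Set.mem_insert_iff.2 (Or.inr ⟨i, ht, rfl⟩)
end

section
/- Uniform lower integral bound implies sign-separated L₁ distance at scale Δ: with the KPR random decomposition of a K_r-minor-free graph X at scale Δ, if u, v are vertices with d(u,v) ≥ (r−1)(4(r+1)Δ+1) (so u and v lie in different components for every random choice λ of cut levels), and if ∫_Λ |F_{Δ,u}(λ,θ)| dλ ≥ ε_r Δ for every θ (and likewise for v), then ‖F_{Δ,u} − F_{Δ,v}‖_{L₁(Ω_Δ)} ≥ ε_r Δ. -/
open MeasureTheory
open scoped ENNReal

/-- Uniform lower integral bound implies sign-separated `L₁` distance at scale `Δ`.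
Abstractly: `Ω = Λ × Θ` with product probability measure, fair-coin signs
`X j : Θ → {-1,1}` with `P(X i ≠ X j) = 1/2` for `i ≠ j`;
`F_u(λ,θ) = X_{k(λ)}(θ)·a(λ)` and `F_v(λ,θ) = X_{l(λ)}(θ)·b(λ)` where
`a(λ) = dist(u, ⋃ D_i(λ)) ≥ 0`, `b(λ) = dist(v, ⋃ D_i(λ)) ≥ 0`, and `u, v` lie in
different components for every `λ`, i.e. `k(λ) ≠ l(λ)`.  If for every `θ`
`∫_Λ |F_u(λ,θ)| dλ ≥ ε_r Δ` and likewise for `v`, then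
`‖F_u − F_v‖_{L₁(Ω)} ≥ ε_r Δ`. -/
theorem kpr_sign_separated_L1_bound {Λ Θ : Type*} [MeasurableSpace Λ] [MeasurableSpace Θ]
    (μ : Measure Λ) (P : Measure Θ) [IsProbabilityMeasure μ] [IsProbabilityMeasure P]
    (X : ℕ → Θ → ℝ) (hXmeas : ∀ j, Measurable (X j))
    (hXval : ∀ (j : ℕ) (θ : Θ), X j θ = 1 ∨ X j θ = -1)
    (hXdiff : ∀ i j : ℕ, i ≠ j → P {θ | X i θ ≠ X j θ} = 1 / 2)
    (k l : Λ → ℕ) (hk : Measurable k) (hl : Measurable l) (hkl : ∀ x : Λ, k x ≠ l x)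
    (a b : Λ → ℝ) (ha0 : ∀ x, 0 ≤ a x) (hb0 : ∀ x, 0 ≤ b x)
    (hai : Integrable a μ) (hbi : Integrable b μ)
    (εr Δ : ℝ) (hε : 0 < εr) (hΔ : 0 < Δ)
    (hA : ∀ θ : Θ, εr * Δ ≤ ∫ x, |X (k x) θ * a x| ∂μ)
    (hB : ∀ θ : Θ, εr * Δ ≤ ∫ x, |X (l x) θ * b x| ∂μ) :
    εr * Δ ≤ ∫ q : Λ × Θ, |X (k q.1) q.2 * a q.1 - X (l q.1) q.2 * b q.1| ∂(μ.prod P) := by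
  -- |X j θ| = 1
  have hXabs : ∀ j θ, |X j θ| = 1 := by
    intro j θ; rcases hXval j θ with h | h <;> simp [h]
  -- Θ is nonempty
  have hΘ : Nonempty Θ := by
    by_contra h
    rw [not_nonempty_iff] at h
    have h1 := measure_univ (μ := P)
    rw [Set.univ_eq_empty_iff.2 h, measure_empty] at h1
    exact zero_ne_one h1
  obtain ⟨θ₀⟩ := hΘ
  -- lower bound on ∫ a
  have hIa : εr * Δ ≤ ∫ x, a x ∂μ := by
    have := hA θ₀
    simpa [abs_mul, hXabs, abs_of_nonneg (ha0 _)] using this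
  -- measurability of the sign fields on the product
  have hXprod : Measurable fun p : Θ × ℕ => X p.2 p.1 :=
    measurable_from_prod_countable_left fun n => hXmeas n
  have hXk : Measurable fun q : Λ × Θ => X (k q.1) q.2 :=
    hXprod.comp (measurable_snd.prodMk (hk.comp measurable_fst))
  have hXl : Measurable fun q : Λ × Θ => X (l q.1) q.2 :=
    hXprod.comp (measurable_snd.prodMk (hl.comp measurable_fst))
  -- integrability of F on the product
  have haF : AEStronglyMeasurable (fun q : Λ × Θ =>
      X (k q.1) q.2 * a q.1 - X (l q.1) q.2 * b q.1) (μ.prod P) := by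
    exact ((hXk.aemeasurable.mul (hai.aemeasurable.comp_fst)).sub
      (hXl.aemeasurable.mul (hbi.aemeasurable.comp_fst))).aestronglyMeasurable
  have hdom : Integrable (fun q : Λ × Θ => a q.1 + b q.1) (μ.prod P) := by
    have h1 : Integrable (fun q : Λ × Θ => a q.1 * (1 : ℝ)) (μ.prod P) :=
      hai.mul_prod (integrable_const 1)
    have h2 : Integrable (fun q : Λ × Θ => b q.1 * (1 : ℝ)) (μ.prod P) :=
      hbi.mul_prod (integrable_const 1)
    simpa [Pi.add_def] using h1.add h2
  have hF : Integrable (fun q : Λ × Θ =>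
      X (k q.1) q.2 * a q.1 - X (l q.1) q.2 * b q.1) (μ.prod P) := by
    refine hdom.mono' haF (Filter.Eventually.of_forall fun q => ?_)
    have := abs_sub (X (k q.1) q.2 * a q.1) (X (l q.1) q.2 * b q.1)
    calc ‖X (k q.1) q.2 * a q.1 - X (l q.1) q.2 * b q.1‖
        ≤ |X (k q.1) q.2 * a q.1| + |X (l q.1) q.2 * b q.1| := abs_sub _ _
      _ = a q.1 + b q.1 := by
          rw [abs_mul, abs_mul, hXabs, hXabs, one_mul, one_mul,
            abs_of_nonneg (ha0 _), abs_of_nonneg (hb0 _)]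
  -- Fubini
  rw [show (fun q : Λ × Θ => |X (k q.1) q.2 * a q.1 - X (l q.1) q.2 * b q.1|)
      = fun q : Λ × Θ => |X (k q.1) q.2 * a q.1 - X (l q.1) q.2 * b q.1| from rfl,
    MeasureTheory.integral_prod _ hF.abs]
  -- inner integral computation
  have key : ∀ x : Λ, ∫ θ, |X (k x) θ * a x - X (l x) θ * b x| ∂P
      = (a x + b x) / 2 + |a x - b x| / 2 := by
    intro x
    set S : Set Θ := {θ | X (k x) θ ≠ X (l x) θ} with hSdef
    have hS : MeasurableSet S :=
      (measurableSet_eq_fun (hXmeas (k x)) (hXmeas (l x))).compl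
    have hPS : P S = 1 / 2 := hXdiff _ _ (hkl x)
    have hPSc : P Sᶜ = 1 / 2 := by
      rw [measure_compl hS (measure_ne_top _ _), measure_univ, hPS]
      rw [ENNReal.sub_eq_of_eq_add (by norm_num)]
      rw [← ENNReal.inv_two_add_inv_two]
      norm_num
    have hfe : (fun θ => |X (k x) θ * a x - X (l x) θ * b x|)
        = fun θ => S.indicator (fun _ => a x + b x) θ
            + Sᶜ.indicator (fun _ => |a x - b x|) θ := by
      funext θ
      by_cases hθ : X (k x) θ ≠ X (l x) θ
      · have hθS : θ ∈ S := hθ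
        rw [Set.indicator_of_mem hθS, Set.indicator_of_notMem (by simpa using hθS)]
        rcases hXval (k x) θ with h1 | h1 <;> rcases hXval (l x) θ with h2 | h2 <;>
          rw [h1, h2] at hθ ⊢ <;> try (exact absurd rfl hθ)
        · rw [add_zero, one_mul, neg_one_mul, sub_neg_eq_add,
            abs_of_nonneg (by linarith [ha0 x, hb0 x])]
        · rw [add_zero, one_mul, neg_one_mul]
          rw [show -a x - b x = -(a x + b x) by ring, abs_neg,
            abs_of_nonneg (by linarith [ha0 x, hb0 x])]
      · push_neg at hθ
        have hθS : θ ∉ S := by simp [hSdef, hθ]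
        rw [Set.indicator_of_notMem hθS, Set.indicator_of_mem (by simpa using hθS)]
        rw [hθ, zero_add, show X (l x) θ * a x - X (l x) θ * b x
          = X (l x) θ * (a x - b x) by ring, abs_mul, hXabs, one_mul]
    rw [hfe, integral_add ((integrable_const _).indicator hS)
      ((integrable_const _).indicator hS.compl),
      integral_indicator_const _ hS, integral_indicator_const _ hS.compl, measureReal_def, measureReal_def, hPS, hPSc]
    simp [ENNReal.toReal_div]
    ring
  calc εr * Δ ≤ ∫ x, a x ∂μ := hIa
    _ ≤ ∫ x, ((a x + b x) / 2 + |a x - b x| / 2) ∂μ := by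
        refine integral_mono hai (((hai.add hbi).div_const 2).add
          ((hai.sub hbi).abs.div_const 2)) fun x => ?_
        have := abs_sub_abs_le_abs_sub (a x) (b x)
        rcases le_total (a x) (b x) with h | h
        · have : 0 ≤ |a x - b x| := abs_nonneg _
          nlinarith [hb0 x]
        · rw [abs_of_nonneg (by linarith)]
          linarith
    _ = ∫ x, ∫ θ, |X (k x) θ * a x - X (l x) θ * b x| ∂P ∂μ := by
        refine (integral_congr_ae (Filter.Eventually.of_forall fun x => ?_)).symm
        exact key x
end
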